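/- The orthogonal complement (with respect to the Frobenius inner product) of the tangent space T_S S(r;n) = {SX + XᵀS : X ∈ ℝ^{n×n}} inside the symmetric matrices equals {A ∈ Sym²(ℝ^n) : A·S = 0}. -/
import Mathlib


open Matrix

lemma trace_mul_transpose_self_eq_zero {n : ℕ} (M : Matrix (Fin n) (Fin n) ℝ)
    (h : (M * Mᵀ).trace = 0) : M = 0 := by
  have htr : (M * Mᵀ).trace = ∑ i, ∑ j, M i j * M i j := by
    simp [Matrix.trace, Matrix.diag, Matrix.mul_apply]
  rw [htr] at h
  ext i j
  have hnn : ∀ i ∈ Finset.univ, (0:ℝ) ≤ ∑ j, M i j * M i j := fun i _ =>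
    Finset.sum_nonneg fun j _ => mul_self_nonneg _
  have h1 := (Finset.sum_eq_zero_iff_of_nonneg hnn).mp h i (Finset.mem_univ i)
  have h2 := (Finset.sum_eq_zero_iff_of_nonneg
    (fun j _ => mul_self_nonneg (M i j))).mp h1 j (Finset.mem_univ j)
  simpa using mul_self_eq_zero.mp h2

/-- For a symmetric matrix `S`, a symmetric matrix `A` is Frobenius-orthogonal to the
tangent space `T_S S(r;n) = {SX + XᵀS : X ∈ ℝ^{n×n}}` if and only if `A * S = 0`. -/
theorem stmt9 (n : ℕ) (S : Matrix (Fin n) (Fin n) ℝ) (hS : S.IsSymm)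
    (A : Matrix (Fin n) (Fin n) ℝ) (hA : A.IsSymm) :
    (∀ X : Matrix (Fin n) (Fin n) ℝ, (A * (S * X + Xᵀ * S)).trace = 0)
      ↔ A * S = 0 := by
  have key : ∀ X : Matrix (Fin n) (Fin n) ℝ,
      (A * (S * X + Xᵀ * S)).trace = 2 * (A * S * X).trace := by
    intro X
    have h2 : (A * (Xᵀ * S)).trace = (A * S * X).trace := by
      have : A * (Xᵀ * S) = (Sᵀ * X * Aᵀ)ᵀ := by
        simp [Matrix.transpose_mul, Matrix.mul_assoc]
      rw [this, Matrix.trace_transpose, hS.eq, hA.eq, Matrix.trace_mul_comm,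
        ← Matrix.mul_assoc]
    rw [Matrix.mul_add, Matrix.trace_add, ← Matrix.mul_assoc, h2]
    ring
  constructor
  · intro h
    have h0 := h (A * S)ᵀ
    rw [key] at h0
    have := mul_eq_zero.mp h0
    have htr : (A * S * (A * S)ᵀ).trace = 0 := by
      rcases this with h' | h'
      · norm_num at h'
      · exact h'
    exact trace_mul_transpose_self_eq_zero _ htr
  · intro h X
    rw [key, h]
    simp
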